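/- Let μ > 0, σ > 0, b ∈ ℝ and φ > 1. Then the expected CRRA utility V(c) = (1/(1−φ))·exp((1−φ)·(c·μ + b) + (1/2)·(1−φ)²·c²·σ²), viewed as a function of the technology level c ∈ ℝ, attains its unique global maximum at c* = μ/((φ−1)·σ²); in particular V is strictly increasing on (−∞, c*] and strictly decreasing on [c*, ∞). (Second half of Proposition 3: for relative risk aversion above one there exists an ex-ante optimal technological plateau.) -/

import Mathlib

open Real Set

/-- Second half of Proposition 3: for relative risk aversion `φ > 1`, the expected CRRA
utility `V(c) = (1/(1-φ)) * exp ((1-φ)(c μ + b) + (1-φ)² c² σ² / 2)` attains its unique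
global maximum at the technological plateau `c* = μ / ((φ - 1) σ²)`; `V` is strictly
increasing on `(-∞, c*]` and strictly decreasing on `[c*, ∞)`. -/
theorem optimal_technological_plateau (μ σ b φ : ℝ) (hμ : 0 < μ) (hσ : 0 < σ)
    (hφ : 1 < φ) :
    (∀ c : ℝ, c ≠ μ / ((φ - 1) * σ ^ 2) →
      (1 / (1 - φ)) *
          Real.exp ((1 - φ) * (c * μ + b) + (1 - φ) ^ 2 * c ^ 2 * σ ^ 2 / 2) <
        (1 / (1 - φ)) *
          Real.exp ((1 - φ) * ((μ / ((φ - 1) * σ ^ 2)) * μ + b) +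
            (1 - φ) ^ 2 * (μ / ((φ - 1) * σ ^ 2)) ^ 2 * σ ^ 2 / 2)) ∧
    StrictMonoOn
      (fun c : ℝ => (1 / (1 - φ)) *
        Real.exp ((1 - φ) * (c * μ + b) + (1 - φ) ^ 2 * c ^ 2 * σ ^ 2 / 2))
      (Iic (μ / ((φ - 1) * σ ^ 2))) ∧
    StrictAntiOn
      (fun c : ℝ => (1 / (1 - φ)) *
        Real.exp ((1 - φ) * (c * μ + b) + (1 - φ) ^ 2 * c ^ 2 * σ ^ 2 / 2))
      (Ici (μ / ((φ - 1) * σ ^ 2))) := by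

  have hd : (0:ℝ) < (φ - 1) * σ ^ 2 := mul_pos (by linarith) (by positivity)
  set c0 := μ / ((φ - 1) * σ ^ 2) with hc0def
  have hc0 : c0 * ((φ - 1) * σ ^ 2) = μ := by
    rw [hc0def]; field_simp; exact div_self (sub_pos.2 hφ).ne'
  have hφn : 1 / (1 - φ) < 0 := by
    apply div_neg_of_pos_of_neg one_pos; linarith
  have key : ∀ x y : ℝ, (y - c0)^2 < (x - c0)^2 →
      (1 / (1 - φ)) * Real.exp ((1 - φ) * (x * μ + b) + (1 - φ) ^ 2 * x ^ 2 * σ ^ 2 / 2) <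
      (1 / (1 - φ)) * Real.exp ((1 - φ) * (y * μ + b) + (1 - φ) ^ 2 * y ^ 2 * σ ^ 2 / 2) := by
    intro x y h
    have hk : (0:ℝ) < (1 - φ) ^ 2 * σ ^ 2 / 2 := by
      have h1 : (0:ℝ) < (1 - φ) ^ 2 := by nlinarith
      positivity
    have hE : (1 - φ) * (y * μ + b) + (1 - φ) ^ 2 * y ^ 2 * σ ^ 2 / 2 <
        (1 - φ) * (x * μ + b) + (1 - φ) ^ 2 * x ^ 2 * σ ^ 2 / 2 := by
      have hid : ((1 - φ) * (x * μ + b) + (1 - φ) ^ 2 * x ^ 2 * σ ^ 2 / 2) -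
          ((1 - φ) * (y * μ + b) + (1 - φ) ^ 2 * y ^ 2 * σ ^ 2 / 2) =
          (1 - φ) ^ 2 * σ ^ 2 / 2 * ((x - c0) ^ 2 - (y - c0) ^ 2) := by
        linear_combination ((φ - 1) * (x - y)) * hc0
      nlinarith [mul_pos hk (sub_pos.2 h)]
    have := Real.exp_lt_exp.2 hE
    exact mul_lt_mul_of_neg_left this hφn
  refine ⟨fun c hc => key c c0 ?_, fun x hx y hy hxy => ?_, fun x hx y hy hxy => ?_⟩
  · have : c - c0 ≠ 0 := sub_ne_zero.2 hc
    have := pow_pos (abs_pos.2 this) 2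
    simp only [sub_self]
    nlinarith [sq_nonneg (c - c0), sq_abs (c - c0)]
  · exact key x y (by simp only [mem_Iic] at hx hy; nlinarith)
  · exact key y x (by simp only [mem_Ici] at hx hy; nlinarith)
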